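/- For n ≥ 2, the image of Ω^{2n}_{2n-1,-1} under Ψ_n: U(W_{≥-1}) → T_n equals (-1)^n binom(2n,n) v_{n-1}^2, a nonzero scalar multiple of v_{n-1}^2. -/

import Mathlib

noncomputable section

/-- Generators of `T_n = A_1 ⊗ U(g_n)`: `t`, `∂`, and `v_0, …, v_{n-1}`. -/
inductive TGen (n : ℕ) : Type
  | t : TGen n
  | d : TGen n
  | v : Fin n → TGen n

/-- Defining relations of `T_n = A_1 ⊗ U(g_n)`: `∂t = t∂ + 1`, the `v_i` commute with
`t` and `∂`, and `[v_i, v_j] = (j-i) v_{i+j}` (with `v_m = 0` for `m ≥ n`). -/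
inductive tnRel (k : Type) [Field k] (n : ℕ) :
    FreeAlgebra k (TGen n) → FreeAlgebra k (TGen n) → Prop
  | dt : tnRel k n (FreeAlgebra.ι k (TGen.d : TGen n) * FreeAlgebra.ι k (TGen.t : TGen n))
      (FreeAlgebra.ι k (TGen.t : TGen n) * FreeAlgebra.ι k (TGen.d : TGen n) + 1)
  | tv (i : Fin n) :
      tnRel k n (FreeAlgebra.ι k (TGen.t : TGen n) * FreeAlgebra.ι k (TGen.v i))
        (FreeAlgebra.ι k (TGen.v i) * FreeAlgebra.ι k (TGen.t : TGen n))
  | dv (i : Fin n) :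
      tnRel k n (FreeAlgebra.ι k (TGen.d : TGen n) * FreeAlgebra.ι k (TGen.v i))
        (FreeAlgebra.ι k (TGen.v i) * FreeAlgebra.ι k (TGen.d : TGen n))
  | vv (i j : Fin n) :
      tnRel k n (FreeAlgebra.ι k (TGen.v i) * FreeAlgebra.ι k (TGen.v j))
        (FreeAlgebra.ι k (TGen.v j) * FreeAlgebra.ι k (TGen.v i) +
          ((j : ℤ) - (i : ℤ)) •
            (if h : i.1 + j.1 < n then FreeAlgebra.ι k (TGen.v (⟨i.1 + j.1, h⟩ : Fin n))
             else 0))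

/-- The algebra `T_n = A_1 ⊗ U(g_n)`, presented by generators and relations. -/
abbrev Tn (k : Type) [Field k] (n : ℕ) := RingQuot (tnRel k n)

/-- The element `t ∈ T_n`. -/
def tT (k : Type) [Field k] (n : ℕ) : Tn k n :=
  RingQuot.mkAlgHom k (tnRel k n) (FreeAlgebra.ι k (TGen.t : TGen n))

/-- The element `∂ ∈ T_n`. -/
def dT (k : Type) [Field k] (n : ℕ) : Tn k n :=
  RingQuot.mkAlgHom k (tnRel k n) (FreeAlgebra.ι k (TGen.d : TGen n))

/-- The element `v_j ∈ T_n`. -/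
def vT (k : Type) [Field k] (n : ℕ) (j : Fin n) : Tn k n :=
  RingQuot.mkAlgHom k (tnRel k n) (FreeAlgebra.ι k (TGen.v j))

/-- The image `c_i = Ψ_n(e_i) = t^{i+1}∂ + Σ_{j=0}^{n-1} binom(i+1,j+1) t^{i-j} v_j ∈ T_n`
of the Witt generator `e_i` under the `n`-th orbit homomorphism. -/
def cT (k : Type) [Field k] (n : ℕ) (i : ℤ) : Tn k n :=
  tT k n ^ (i + 1).toNat * dT k n +
    ∑ j : Fin n, (((i + 1).toNat.choose (j.1 + 1) : ℤ)) •
      (tT k n ^ (i - j.1).toNat * vT k n j)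

/-- The image of the differentiator `Ω^m_{k,s}` under `Ψ_n`, computed via
`Ψ_n(e_i) = c_i`: `Ω^0 = c_k c_s`, `Ω^{m+1}_{k,s} = Ω^m_{k,s} - Ω^m_{k-1,s+1}`. -/
def ΩT (k : Type) [Field k] (n : ℕ) : ℕ → ℤ → ℤ → Tn k n
  | 0, a, s => cT k n a * cT k n s
  | m + 1, a, s => ΩT k n m a s - ΩT k n m (a - 1) (s + 1)

namespace PsiAux

open Finset

variable (k : Type) [Field k] (n : ℕ)

lemma dt_rel : dT k n * tT k n = tT k n * dT k n + 1 := by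
  have h := RingQuot.mkAlgHom_rel k (tnRel.dt (k := k) (n := n))
  simpa [tT, dT, map_mul, map_add, map_one] using h

lemma tv_rel (j : Fin n) : tT k n * vT k n j = vT k n j * tT k n := by
  have h := RingQuot.mkAlgHom_rel k (tnRel.tv (k := k) (n := n) j)
  simpa [tT, vT, map_mul] using h

lemma dv_rel (j : Fin n) : dT k n * vT k n j = vT k n j * dT k n := by
  have h := RingQuot.mkAlgHom_rel k (tnRel.dv (k := k) (n := n) j)
  simpa [dT, vT, map_mul] using h

lemma t_pow_v (m : ℕ) (j : Fin n) : tT k n ^ m * vT k n j = vT k n j * tT k n ^ m :=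
  ((Commute.pow_left (tv_rel k n j) m)).eq

lemma d_pow_t (m : ℕ) :
    dT k n * tT k n ^ m = tT k n ^ m * dT k n + (m : ℤ) • tT k n ^ (m - 1) := by
  induction m with
  | zero => simp
  | succ m ih =>
    calc dT k n * tT k n ^ (m + 1) = (dT k n * tT k n ^ m) * tT k n := by
          rw [pow_succ, mul_assoc]
      _ = (tT k n ^ m * dT k n + (m : ℤ) • tT k n ^ (m - 1)) * tT k n := by rw [ih]
      _ = tT k n ^ m * (dT k n * tT k n) + (m : ℤ) • (tT k n ^ (m - 1) * tT k n) := by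
          noncomm_ring
      _ = tT k n ^ m * (tT k n * dT k n + 1) + (m : ℤ) • tT k n ^ (m - 1 + 1) := by
          rw [dt_rel, pow_succ]
      _ = tT k n ^ (m + 1) * dT k n + (tT k n ^ m + (m : ℤ) • tT k n ^ (m - 1 + 1)) := by
          rw [pow_succ']; noncomm_ring
      _ = tT k n ^ (m + 1) * dT k n + ((m : ℤ) + 1) • tT k n ^ m := by
          rcases Nat.eq_zero_or_pos m with rfl | hm
          · simp
          · rw [show m - 1 + 1 = m by omega, add_zsmul, one_smul, add_comm (tT k n ^ m)]
      _ = tT k n ^ (m + 1) * dT k n + ((m + 1 : ℕ) : ℤ) • tT k n ^ (m + 1 - 1) := by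
          push_cast [Nat.add_sub_cancel]; rfl

lemma cT_left (i : ℕ) (hi : i ≤ 2 * n) :
    cT k n (2 * (n : ℤ) - 1 - (i : ℤ)) =
      tT k n ^ (2 * n - i) * dT k n +
        ∑ j : Fin n, (((2 * n - i).choose (j.1 + 1) : ℤ)) •
          (tT k n ^ (2 * n - 1 - i - j.1) * vT k n j) := by
  have e1 : (2 * (n : ℤ) - 1 - (i : ℤ) + 1).toNat = 2 * n - i := by omega
  have e2 : ∀ j : Fin n, (2 * (n : ℤ) - 1 - (i : ℤ) - (j.1 : ℤ)).toNat = 2 * n - 1 - i - j.1 :=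
    fun j => by omega
  rw [cT, e1]
  congr 1
  exact Finset.sum_congr rfl fun j _ => by rw [e2 j]

lemma cT_right (i : ℕ) :
    cT k n (-1 + (i : ℤ)) =
      tT k n ^ i * dT k n +
        ∑ j : Fin n, ((i.choose (j.1 + 1) : ℤ)) •
          (tT k n ^ (i - 1 - j.1) * vT k n j) := by
  have e1 : (-1 + (i : ℤ) + 1).toNat = i := by omega
  have e2 : ∀ j : Fin n, (-1 + (i : ℤ) - (j.1 : ℤ)).toNat = i - 1 - j.1 := fun j => by omega
  rw [cT, e1]
  congr 1
  exact Finset.sum_congr rfl fun j _ => by rw [e2 j]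


lemma csmul_congr (c : ℕ) {x y : Tn k n} (h : c ≠ 0 → x = y) : (c : ℤ) • x = (c : ℤ) • y := by
  rcases eq_or_ne c 0 with rfl | hc
  · simp
  · rw [h hc]

lemma choose_ne_imp {a b : ℕ} (h : a.choose b ≠ 0) : b ≤ a := by
  by_contra h'
  exact h (Nat.choose_eq_zero_of_lt (by omega))

lemma hPQ (i : ℕ) (hi : i ≤ 2 * n) :
    (tT k n ^ (2 * n - i) * dT k n) * (tT k n ^ i * dT k n) =
      tT k n ^ (2 * n) * dT k n ^ 2 + (i : ℤ) • (tT k n ^ (2 * n - 1) * dT k n) := by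
  calc (tT k n ^ (2 * n - i) * dT k n) * (tT k n ^ i * dT k n)
      = tT k n ^ (2 * n - i) * (dT k n * tT k n ^ i) * dT k n := by noncomm_ring
    _ = tT k n ^ (2 * n - i) * (tT k n ^ i * dT k n + (i : ℤ) • tT k n ^ (i - 1)) * dT k n := by
        rw [d_pow_t]
    _ = (tT k n ^ (2 * n - i) * tT k n ^ i) * (dT k n * dT k n)
        + (i : ℤ) • ((tT k n ^ (2 * n - i) * tT k n ^ (i - 1)) * dT k n) := by noncomm_ring
    _ = tT k n ^ (2 * n) * dT k n ^ 2 + (i : ℤ) • (tT k n ^ (2 * n - 1) * dT k n) := by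
        rw [← pow_add, show 2 * n - i + i = 2 * n by omega, sq]
        congr 1
        rcases Nat.eq_zero_or_pos i with rfl | hi0
        · simp
        · rw [← pow_add, show 2 * n - i + (i - 1) = 2 * n - 1 by omega]

lemma hPRj (i : ℕ) (hi : i ≤ 2 * n) (j : Fin n) :
    (tT k n ^ (2 * n - i) * dT k n) * ((i.choose (j.1 + 1) : ℤ) • (tT k n ^ (i - 1 - j.1) * vT k n j))
      = (i.choose (j.1 + 1) : ℤ) • (tT k n ^ (2 * n - 1 - j.1) * vT k n j * dT k n)
        + (((j.1 + 2) * i.choose (j.1 + 2) : ℕ) : ℤ) • (tT k n ^ (2 * n - 2 - j.1) * vT k n j) := by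
  calc (tT k n ^ (2 * n - i) * dT k n) * ((i.choose (j.1 + 1) : ℤ) • (tT k n ^ (i - 1 - j.1) * vT k n j))
      = (i.choose (j.1 + 1) : ℤ) • (tT k n ^ (2 * n - i) * (dT k n * tT k n ^ (i - 1 - j.1)) * vT k n j) := by
        noncomm_ring
    _ = (i.choose (j.1 + 1) : ℤ) • (tT k n ^ (2 * n - i) *
          (tT k n ^ (i - 1 - j.1) * dT k n + ((i - 1 - j.1 : ℕ) : ℤ) • tT k n ^ (i - 1 - j.1 - 1)) * vT k n j) := by
        rw [d_pow_t]
    _ = (i.choose (j.1 + 1) : ℤ) • ((tT k n ^ (2 * n - i) * tT k n ^ (i - 1 - j.1)) * (dT k n * vT k n j))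
        + ((i.choose (j.1 + 1) * (i - 1 - j.1) : ℕ) : ℤ) •
            ((tT k n ^ (2 * n - i) * tT k n ^ (i - 1 - j.1 - 1)) * vT k n j) := by
        push_cast
        simp only [mul_add, add_mul, zsmul_add, ← mul_zsmul, mul_smul_comm, smul_mul_assoc]
        noncomm_ring
    _ = (i.choose (j.1 + 1) : ℤ) • (tT k n ^ (2 * n - i + (i - 1 - j.1)) * (vT k n j * dT k n))
        + ((i.choose (j.1 + 1) * (i - 1 - j.1) : ℕ) : ℤ) •
            (tT k n ^ (2 * n - i + (i - 1 - j.1 - 1)) * vT k n j) := by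
        rw [dv_rel, ← pow_add, ← pow_add]
    _ = (i.choose (j.1 + 1) : ℤ) • (tT k n ^ (2 * n - 1 - j.1) * vT k n j * dT k n)
        + (((j.1 + 2) * i.choose (j.1 + 2) : ℕ) : ℤ) • (tT k n ^ (2 * n - 2 - j.1) * vT k n j) := by
        congr 1
        · refine csmul_congr k n _ fun hc => ?_
          have hle : j.1 + 1 ≤ i := choose_ne_imp hc
          rw [← mul_assoc, show 2 * n - i + (i - 1 - j.1) = 2 * n - 1 - j.1 by omega]
        · rw [show i.choose (j.1 + 1) * (i - 1 - j.1) = (j.1 + 2) * i.choose (j.1 + 2) by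
            have h1 : i.choose (j.1 + 2) * (j.1 + 2) = i.choose (j.1 + 1) * (i - (j.1 + 1)) :=
              Nat.choose_succ_right_eq i (j.1 + 1)
            rw [show i - 1 - j.1 = i - (j.1 + 1) by omega,
              mul_comm (j.1 + 2) (i.choose (j.1 + 2))]
            exact h1.symm]
          refine csmul_congr k n _ fun hc => ?_
          have hc2 : i.choose (j.1 + 2) ≠ 0 := by
            intro h0; exact hc (by rw [h0, Nat.mul_zero])
          have hle : j.1 + 2 ≤ i := choose_ne_imp hc2
          rw [show 2 * n - i + (i - 1 - j.1 - 1) = 2 * n - 2 - j.1 by omega]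

lemma hSQj (i : ℕ) (hi : i ≤ 2 * n) (j : Fin n) :
    (((2 * n - i).choose (j.1 + 1) : ℤ)) • (tT k n ^ (2 * n - 1 - i - j.1) * vT k n j) * (tT k n ^ i * dT k n)
      = (((2 * n - i).choose (j.1 + 1) : ℤ)) • (tT k n ^ (2 * n - 1 - j.1) * vT k n j * dT k n) := by
  calc (((2 * n - i).choose (j.1 + 1) : ℤ)) • (tT k n ^ (2 * n - 1 - i - j.1) * vT k n j) * (tT k n ^ i * dT k n)
      = (((2 * n - i).choose (j.1 + 1) : ℤ)) •
          (tT k n ^ (2 * n - 1 - i - j.1) * (vT k n j * tT k n ^ i) * dT k n) := by noncomm_ring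
    _ = (((2 * n - i).choose (j.1 + 1) : ℤ)) •
          ((tT k n ^ (2 * n - 1 - i - j.1) * tT k n ^ i) * (vT k n j * dT k n)) := by
        rw [← t_pow_v]; noncomm_ring
    _ = (((2 * n - i).choose (j.1 + 1) : ℤ)) • (tT k n ^ (2 * n - 1 - j.1) * vT k n j * dT k n) := by
        rw [← pow_add]
        refine csmul_congr k n _ fun hc => ?_
        have hle : j.1 + 1 ≤ 2 * n - i := choose_ne_imp hc
        rw [← mul_assoc, show 2 * n - 1 - i - j.1 + i = 2 * n - 1 - j.1 by omega]

lemma hSRpq (i : ℕ) (hi : i ≤ 2 * n) (p q : Fin n) :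
    (((2 * n - i).choose (p.1 + 1) : ℤ)) • (tT k n ^ (2 * n - 1 - i - p.1) * vT k n p) *
        ((i.choose (q.1 + 1) : ℤ) • (tT k n ^ (i - 1 - q.1) * vT k n q))
      = (((2 * n - i).choose (p.1 + 1) * i.choose (q.1 + 1) : ℕ) : ℤ) •
          (tT k n ^ (2 * n - 2 - p.1 - q.1) * vT k n p * vT k n q) := by
  calc (((2 * n - i).choose (p.1 + 1) : ℤ)) • (tT k n ^ (2 * n - 1 - i - p.1) * vT k n p) *
        ((i.choose (q.1 + 1) : ℤ) • (tT k n ^ (i - 1 - q.1) * vT k n q))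
      = (((2 * n - i).choose (p.1 + 1) * i.choose (q.1 + 1) : ℕ) : ℤ) •
          (tT k n ^ (2 * n - 1 - i - p.1) * (vT k n p * tT k n ^ (i - 1 - q.1)) * vT k n q) := by
        rw [smul_mul_smul_comm, Nat.cast_mul]
        congr 1
        noncomm_ring
    _ = (((2 * n - i).choose (p.1 + 1) * i.choose (q.1 + 1) : ℕ) : ℤ) •
          ((tT k n ^ (2 * n - 1 - i - p.1) * tT k n ^ (i - 1 - q.1)) * (vT k n p * vT k n q)) := by
        rw [← t_pow_v]; noncomm_ring
    _ = (((2 * n - i).choose (p.1 + 1) * i.choose (q.1 + 1) : ℕ) : ℤ) •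
          (tT k n ^ (2 * n - 2 - p.1 - q.1) * vT k n p * vT k n q) := by
        rw [← pow_add]
        refine csmul_congr k n _ fun hc => ?_
        rw [Nat.mul_ne_zero_iff] at hc
        have h1 : p.1 + 1 ≤ 2 * n - i := choose_ne_imp hc.1
        have h2 : q.1 + 1 ≤ i := choose_ne_imp hc.2
        rw [← mul_assoc, show 2 * n - 1 - i - p.1 + (i - 1 - q.1) = 2 * n - 2 - p.1 - q.1 by omega]


lemma expand (i : ℕ) (hi : i ≤ 2 * n) :
    cT k n (2 * (n : ℤ) - 1 - (i : ℤ)) * cT k n (-1 + (i : ℤ)) =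
      tT k n ^ (2 * n) * dT k n ^ 2
      + (i : ℤ) • (tT k n ^ (2 * n - 1) * dT k n)
      + (∑ j : Fin n, ((i.choose (j.1 + 1) + (2 * n - i).choose (j.1 + 1) : ℕ) : ℤ) •
          (tT k n ^ (2 * n - 1 - j.1) * vT k n j * dT k n))
      + (∑ j : Fin n, (((j.1 + 2) * i.choose (j.1 + 2) : ℕ) : ℤ) •
          (tT k n ^ (2 * n - 2 - j.1) * vT k n j))
      + (∑ p : Fin n, ∑ q : Fin n, (((2 * n - i).choose (p.1 + 1) * i.choose (q.1 + 1) : ℕ) : ℤ) •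
          (tT k n ^ (2 * n - 2 - p.1 - q.1) * vT k n p * vT k n q)) := by
  rw [cT_left k n i hi, cT_right k n i]
  have e1 := hPQ k n i hi
  have e2 : (tT k n ^ (2 * n - i) * dT k n) *
        (∑ j : Fin n, ((i.choose (j.1 + 1) : ℤ)) • (tT k n ^ (i - 1 - j.1) * vT k n j))
      = (∑ j : Fin n, (i.choose (j.1 + 1) : ℤ) • (tT k n ^ (2 * n - 1 - j.1) * vT k n j * dT k n))
        + ∑ j : Fin n, (((j.1 + 2) * i.choose (j.1 + 2) : ℕ) : ℤ) •
            (tT k n ^ (2 * n - 2 - j.1) * vT k n j) := by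
    rw [Finset.mul_sum, Finset.sum_congr rfl fun j _ => hPRj k n i hi j,
      Finset.sum_add_distrib]
  have e3 : (∑ j : Fin n, (((2 * n - i).choose (j.1 + 1) : ℤ)) •
          (tT k n ^ (2 * n - 1 - i - j.1) * vT k n j)) * (tT k n ^ i * dT k n)
      = ∑ j : Fin n, (((2 * n - i).choose (j.1 + 1) : ℤ)) •
          (tT k n ^ (2 * n - 1 - j.1) * vT k n j * dT k n) := by
    rw [Finset.sum_mul]
    exact Finset.sum_congr rfl fun j _ => hSQj k n i hi j
  have e4 : (∑ p : Fin n, (((2 * n - i).choose (p.1 + 1) : ℤ)) •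
          (tT k n ^ (2 * n - 1 - i - p.1) * vT k n p)) *
        (∑ q : Fin n, ((i.choose (q.1 + 1) : ℤ)) • (tT k n ^ (i - 1 - q.1) * vT k n q))
      = ∑ p : Fin n, ∑ q : Fin n, (((2 * n - i).choose (p.1 + 1) * i.choose (q.1 + 1) : ℕ) : ℤ) •
          (tT k n ^ (2 * n - 2 - p.1 - q.1) * vT k n p * vT k n q) := by
    rw [Finset.sum_mul_sum]
    exact Finset.sum_congr rfl fun p _ => Finset.sum_congr rfl fun q _ => hSRpq k n i hi p q
  have emerge : (∑ j : Fin n, ((i.choose (j.1 + 1) + (2 * n - i).choose (j.1 + 1) : ℕ) : ℤ) •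
          (tT k n ^ (2 * n - 1 - j.1) * vT k n j * dT k n))
      = (∑ j : Fin n, (i.choose (j.1 + 1) : ℤ) • (tT k n ^ (2 * n - 1 - j.1) * vT k n j * dT k n))
        + ∑ j : Fin n, (((2 * n - i).choose (j.1 + 1) : ℤ)) •
            (tT k n ^ (2 * n - 1 - j.1) * vT k n j * dT k n) := by
    rw [← Finset.sum_add_distrib]
    exact Finset.sum_congr rfl fun j _ => by push_cast; rw [add_zsmul]
  rw [add_mul, mul_add, mul_add, e1, e2, e3, e4, emerge]
  abel

lemma omega_sum (m : ℕ) (a s : ℤ) :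
    ΩT k n m a s = ∑ i ∈ Finset.range (m + 1),
      ((-1 : ℤ) ^ i * ((m.choose i : ℕ) : ℤ)) • (cT k n (a - (i : ℤ)) * cT k n (s + (i : ℤ))) := by
  induction m generalizing a s with
  | zero => simp [ΩT]
  | succ m ih =>
    have hstep : ΩT k n (m + 1) a s = ΩT k n m a s - ΩT k n m (a - 1) (s + 1) := rfl
    rw [hstep, ih, ih]
    set g : ℕ → Tn k n := fun i =>
      ((-1 : ℤ) ^ i * ((m.choose i : ℕ) : ℤ)) • (cT k n (a - (i : ℤ)) * cT k n (s + (i : ℤ)))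
      with hg
    have key : ∀ i : ℕ, ((-1 : ℤ) ^ (i + 1) * (((m + 1).choose (i + 1) : ℕ) : ℤ)) •
          (cT k n (a - ((i + 1 : ℕ) : ℤ)) * cT k n (s + ((i + 1 : ℕ) : ℤ)))
        = g (i + 1) - ((-1 : ℤ) ^ i * ((m.choose i : ℕ) : ℤ)) •
            (cT k n (a - 1 - (i : ℤ)) * cT k n (s + 1 + (i : ℤ))) := by
      intro i
      have e : cT k n (a - 1 - (i : ℤ)) * cT k n (s + 1 + (i : ℤ))
          = cT k n (a - ((i + 1 : ℕ) : ℤ)) * cT k n (s + ((i + 1 : ℕ) : ℤ)) := by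
        rw [show a - ((i + 1 : ℕ) : ℤ) = a - 1 - (i : ℤ) by push_cast; ring,
          show s + ((i + 1 : ℕ) : ℤ) = s + 1 + (i : ℤ) by push_cast; ring]
      show _ = ((-1 : ℤ) ^ (i + 1) * ((m.choose (i + 1) : ℕ) : ℤ)) •
          (cT k n (a - ((i + 1 : ℕ) : ℤ)) * cT k n (s + ((i + 1 : ℕ) : ℤ))) - _
      rw [e, ← sub_smul]
      congr 1
      rw [Nat.choose_succ_succ]
      push_cast
      ring
    conv_rhs => rw [Finset.sum_range_succ' _ (m + 1)]
    simp only [key]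
    rw [Finset.sum_sub_distrib]
    have hgm1 : g (m + 1) = 0 := by
      rw [hg]; simp [Nat.choose_succ_self]
    have hf0 : ((-1 : ℤ) ^ (0 : ℕ) * (((m + 1).choose 0 : ℕ) : ℤ)) •
        (cT k n (a - ((0 : ℕ) : ℤ)) * cT k n (s + ((0 : ℕ) : ℤ))) = g 0 := by
      rw [hg]; simp
    rw [hf0]
    have h1 : (∑ i ∈ Finset.range (m + 1), g (i + 1)) + g 0 = ∑ i ∈ Finset.range (m + 1), g i := by
      rw [← Finset.sum_range_succ' g (m + 1), Finset.sum_range_succ, hgm1, add_zero]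
    rw [← h1]
    abel


/-- Subset-of-subset identity, unconditional. -/
lemma choose_sub1 (m s j : ℕ) :
    m.choose (s + j) * (s + j).choose s = m.choose s * (m - s).choose j := by
  rcases le_or_gt (s + j) m with h | h
  · have := Nat.choose_mul (n := m) (k := s + j) (s := s) (Nat.le_add_right s j)
    simpa [Nat.add_sub_cancel_left] using this
  · rw [Nat.choose_eq_zero_of_lt h, Nat.zero_mul]
    rcases le_or_gt s m with hs | hs
    · rw [Nat.choose_eq_zero_of_lt (by omega : m - s < j), Nat.mul_zero]
    · rw [Nat.choose_eq_zero_of_lt hs, Nat.zero_mul]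

/-- Trinomial revision, unconditional. -/
lemma choose_tri (M i r : ℕ) :
    M.choose i * (M - i).choose r = M.choose r * (M - r).choose i := by
  rcases le_or_gt (i + r) M with h | h
  · have h1 := Nat.choose_mul (n := M) (k := i + r) (s := i) (Nat.le_add_right _ _)
    have h2 := Nat.choose_mul (n := M) (k := i + r) (s := r) (Nat.le_add_left _ _)
    rw [Nat.add_sub_cancel_left] at h1
    rw [Nat.add_sub_cancel] at h2
    rw [Nat.choose_symm_add] at h1
    omega
  · have e1 : M.choose i * (M - i).choose r = 0 := by
      rcases le_or_gt i M with hi | hi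
      · rw [Nat.choose_eq_zero_of_lt (by omega : M - i < r), Nat.mul_zero]
      · rw [Nat.choose_eq_zero_of_lt hi, Nat.zero_mul]
    have e2 : M.choose r * (M - r).choose i = 0 := by
      rcases le_or_gt r M with hr | hr
      · rw [Nat.choose_eq_zero_of_lt (by omega : M - r < i), Nat.mul_zero]
      · rw [Nat.choose_eq_zero_of_lt hr, Nat.zero_mul]
    rw [e1, e2]

/-- Padded alternating sum of binomials. -/
lemma alt_pad (m K : ℕ) (h : m < K) :
    ∑ j ∈ range K, (-1 : ℤ) ^ j * (m.choose j : ℤ) = if m = 0 then 1 else 0 := by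
  rw [← Int.alternating_sum_range_choose (n := m)]
  symm
  apply Finset.sum_subset
  · intro x hx; simp only [mem_range] at *; omega
  · intro x _ hx
    simp only [mem_range, not_lt] at hx
    rw [Nat.choose_eq_zero_of_lt (by omega), Int.natCast_zero, mul_zero]

/-- Core alternating-sum identity: `∑ (-1)^i C(m,i) C(i,s) = (-1)^m [s = m]`. -/
lemma alt_core (m s N : ℕ) (hN : m < N) :
    ∑ i ∈ range N, (-1 : ℤ) ^ i * (m.choose i : ℤ) * (i.choose s : ℤ)
      = if s = m then (-1 : ℤ) ^ m else 0 := by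
  rcases le_or_gt N s with hNs | hsN
  · rw [Finset.sum_eq_zero, if_neg (by omega)]
    intro i hi
    rw [mem_range] at hi
    rw [Nat.choose_eq_zero_of_lt (show i < s by omega), Int.natCast_zero, mul_zero]
  · -- split range N at s
    rw [range_eq_Ico, ← Finset.sum_Ico_consecutive _ (Nat.zero_le s) (le_of_lt hsN)]
    have h1 : ∑ i ∈ Finset.Ico 0 s, (-1 : ℤ) ^ i * (m.choose i : ℤ) * (i.choose s : ℤ) = 0 := by
      apply Finset.sum_eq_zero
      intro i hi
      rw [Finset.mem_Ico] at hi
      rw [Nat.choose_eq_zero_of_lt (show i < s by omega), Int.natCast_zero, mul_zero]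
    rw [h1, zero_add, Finset.sum_Ico_eq_sum_range]
    have h2 : ∀ j, (-1 : ℤ) ^ (s + j) * (m.choose (s + j) : ℤ) * ((s + j).choose s : ℤ)
        = ((-1 : ℤ) ^ s * (m.choose s : ℤ)) * ((-1 : ℤ) ^ j * ((m - s).choose j : ℤ)) := by
      intro j
      have := choose_sub1 m s j
      have : ((m.choose (s + j) * (s + j).choose s : ℕ) : ℤ)
          = ((m.choose s * (m - s).choose j : ℕ) : ℤ) := by rw [this]
      push_cast at this
      rw [pow_add]
      linear_combination ((-1 : ℤ) ^ s * (-1 : ℤ) ^ j) * this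
    rw [Finset.sum_congr rfl (fun j _ => h2 j), ← Finset.mul_sum]
    rw [alt_pad (m - s) (N - s) (by omega)]
    rcases eq_or_ne s m with rfl | hne
    · simp
    · rcases le_or_gt s m with hsm | hsm
      · rw [if_neg (by omega), mul_zero, if_neg hne]
      · rw [if_neg hne]
        rw [Nat.choose_eq_zero_of_lt hsm]
        simp

lemma alt_tri (M r s N : ℕ) (hN : M < N) :
    ∑ i ∈ range N, (-1 : ℤ) ^ i * (M.choose i : ℤ) * (((M - i).choose r * i.choose s : ℕ) : ℤ)
      = if r + s = M then (-1 : ℤ) ^ s * (M.choose r : ℤ) else 0 := by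
  have step : ∀ i, (-1 : ℤ) ^ i * (M.choose i : ℤ) * (((M - i).choose r * i.choose s : ℕ) : ℤ)
      = (M.choose r : ℤ) * ((-1 : ℤ) ^ i * ((M - r).choose i : ℤ) * (i.choose s : ℤ)) := by
    intro i
    have h' : (M.choose i : ℤ) * ((M - i).choose r : ℤ)
        = (M.choose r : ℤ) * ((M - r).choose i : ℤ) := by exact_mod_cast choose_tri M i r
    push_cast
    linear_combination ((-1 : ℤ) ^ i * (i.choose s : ℤ)) * h'
  rw [Finset.sum_congr rfl fun i _ => step i, ← Finset.mul_sum,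
    alt_core (M - r) s N (by omega)]
  rcases le_or_gt r M with hr | hr
  · rcases eq_or_ne (r + s) M with he | hne
    · rw [if_pos (by omega : s = M - r), if_pos he, show M - r = s by omega]
      ring
    · rw [if_neg (by omega : ¬ s = M - r), if_neg hne, mul_zero]
  · rw [Nat.choose_eq_zero_of_lt hr]
    simp

/-- The normal-ordered form of `c_{2n-1-i} c_{i-1}`. -/
def bigTerm (k : Type) [Field k] (n i : ℕ) : Tn k n :=
  tT k n ^ (2 * n) * dT k n ^ 2
  + (i : ℤ) • (tT k n ^ (2 * n - 1) * dT k n)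
  + (∑ j : Fin n, ((i.choose (j.1 + 1) + (2 * n - i).choose (j.1 + 1) : ℕ) : ℤ) •
      (tT k n ^ (2 * n - 1 - j.1) * vT k n j * dT k n))
  + (∑ j : Fin n, (((j.1 + 2) * i.choose (j.1 + 2) : ℕ) : ℤ) •
      (tT k n ^ (2 * n - 2 - j.1) * vT k n j))
  + (∑ p : Fin n, ∑ q : Fin n, (((2 * n - i).choose (p.1 + 1) * i.choose (q.1 + 1) : ℕ) : ℤ) •
      (tT k n ^ (2 * n - 2 - p.1 - q.1) * vT k n p * vT k n q))

end PsiAux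

/-- For `n ≥ 2`, `Ψ_n(Ω^{2n}_{2n-1,-1}) = (-1)^n binom(2n,n) v_{n-1}²`, a nonzero
scalar multiple of `v_{n-1}²`. -/
theorem psi_omega_eq (k : Type) [Field k] [CharZero k] (n : ℕ) (hn : 2 ≤ n) :
    ΩT k n (2 * n) (2 * n - 1) (-1)
        = ((-1 : ℤ) ^ n * ((2 * n).choose n : ℤ)) • (vT k n (⟨n - 1, by omega⟩ : Fin n)) ^ 2 ∧
      ((-1 : ℤ) ^ n * ((2 * n).choose n : ℤ)) ≠ 0 := by
  constructor
  · rw [PsiAux.omega_sum]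
    have hrw : ∑ i ∈ Finset.range (2 * n + 1),
          ((-1 : ℤ) ^ i * (((2 * n).choose i : ℕ) : ℤ)) •
            (cT k n (2 * (n : ℤ) - 1 - (i : ℤ)) * cT k n (-1 + (i : ℤ)))
        = ∑ i ∈ Finset.range (2 * n + 1),
          ((-1 : ℤ) ^ i * (((2 * n).choose i : ℕ) : ℤ)) • PsiAux.bigTerm k n i :=
      Finset.sum_congr rfl fun i hi => by
        rw [PsiAux.expand k n i (Nat.lt_succ_iff.mp (Finset.mem_range.mp hi))]; rfl
    rw [hrw]
    simp only [PsiAux.bigTerm, zsmul_add]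
    rw [Finset.sum_add_distrib, Finset.sum_add_distrib, Finset.sum_add_distrib,
      Finset.sum_add_distrib]
    have c1 : ∑ i ∈ Finset.range (2 * n + 1), (-1 : ℤ) ^ i * (((2 * n).choose i : ℕ) : ℤ) = 0 := by
      have h := PsiAux.alt_core (2 * n) 0 (2 * n + 1) (by omega)
      rw [if_neg (by omega)] at h
      simpa using h
    have hA : ∑ i ∈ Finset.range (2 * n + 1), ((-1 : ℤ) ^ i * (((2 * n).choose i : ℕ) : ℤ)) •
        (tT k n ^ (2 * n) * dT k n ^ 2) = 0 := by
      erw [← Finset.sum_smul]; rw [c1, zero_smul]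
    have hB : ∑ i ∈ Finset.range (2 * n + 1), ((-1 : ℤ) ^ i * (((2 * n).choose i : ℕ) : ℤ)) •
        ((i : ℤ) • (tT k n ^ (2 * n - 1) * dT k n)) = 0 := by
      simp only [smul_smul]
      erw [← Finset.sum_smul]
      have h := PsiAux.alt_core (2 * n) 1 (2 * n + 1) (by omega)
      rw [if_neg (by omega)] at h
      have h' : ∑ i ∈ Finset.range (2 * n + 1),
          (-1 : ℤ) ^ i * (((2 * n).choose i : ℕ) : ℤ) * (i : ℤ) = 0 := by
        simpa [Nat.choose_one_right] using h
      rw [h', zero_smul]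
    have hC : ∑ i ∈ Finset.range (2 * n + 1), ((-1 : ℤ) ^ i * (((2 * n).choose i : ℕ) : ℤ)) •
        (∑ j : Fin n, ((i.choose (j.1 + 1) + (2 * n - i).choose (j.1 + 1) : ℕ) : ℤ) •
          (tT k n ^ (2 * n - 1 - j.1) * vT k n j * dT k n)) = 0 := by
      simp only [← Finset.sum_zsmul, ← mul_zsmul]
      rw [Finset.sum_comm]
      apply Finset.sum_eq_zero
      intro j _
      erw [← Finset.sum_smul]
      have h1 := PsiAux.alt_core (2 * n) (j.1 + 1) (2 * n + 1) (by omega)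
      rw [if_neg (by have := j.2; omega)] at h1
      have h2 := PsiAux.alt_tri (2 * n) (j.1 + 1) 0 (2 * n + 1) (by omega)
      rw [if_neg (by have := j.2; omega)] at h2
      simp only [Nat.choose_zero_right, Nat.mul_one] at h2
      have hz : ∑ i ∈ Finset.range (2 * n + 1),
          (-1 : ℤ) ^ i * (((2 * n).choose i : ℕ) : ℤ) *
            ((i.choose (j.1 + 1) + (2 * n - i).choose (j.1 + 1) : ℕ) : ℤ) = 0 := by
        have hsplit : ∀ i : ℕ, (-1 : ℤ) ^ i * (((2 * n).choose i : ℕ) : ℤ) *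
              ((i.choose (j.1 + 1) + (2 * n - i).choose (j.1 + 1) : ℕ) : ℤ)
            = (-1 : ℤ) ^ i * (((2 * n).choose i : ℕ) : ℤ) * ((i.choose (j.1 + 1) : ℕ) : ℤ)
              + (-1 : ℤ) ^ i * (((2 * n).choose i : ℕ) : ℤ) *
                  (((2 * n - i).choose (j.1 + 1) : ℕ) : ℤ) := fun i => by push_cast; ring
        rw [Finset.sum_congr rfl fun i _ => hsplit i, Finset.sum_add_distrib, h1, h2, add_zero]
      rw [hz, zero_smul]
    have hD : ∑ i ∈ Finset.range (2 * n + 1), ((-1 : ℤ) ^ i * (((2 * n).choose i : ℕ) : ℤ)) •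
        (∑ j : Fin n, (((j.1 + 2) * i.choose (j.1 + 2) : ℕ) : ℤ) •
          (tT k n ^ (2 * n - 2 - j.1) * vT k n j)) = 0 := by
      simp only [← Finset.sum_zsmul, ← mul_zsmul]
      rw [Finset.sum_comm]
      apply Finset.sum_eq_zero
      intro j _
      erw [← Finset.sum_smul]
      have h1 := PsiAux.alt_core (2 * n) (j.1 + 2) (2 * n + 1) (by omega)
      rw [if_neg (by have := j.2; omega)] at h1
      have hz : ∑ i ∈ Finset.range (2 * n + 1),
          (-1 : ℤ) ^ i * (((2 * n).choose i : ℕ) : ℤ) *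
            (((j.1 + 2) * i.choose (j.1 + 2) : ℕ) : ℤ) = 0 := by
        have hsplit : ∀ i : ℕ, (-1 : ℤ) ^ i * (((2 * n).choose i : ℕ) : ℤ) *
              (((j.1 + 2) * i.choose (j.1 + 2) : ℕ) : ℤ)
            = ((j.1 + 2 : ℕ) : ℤ) *
                ((-1 : ℤ) ^ i * (((2 * n).choose i : ℕ) : ℤ) * ((i.choose (j.1 + 2) : ℕ) : ℤ)) :=
          fun i => by push_cast; ring
        rw [Finset.sum_congr rfl fun i _ => hsplit i, ← Finset.mul_sum, h1, mul_zero]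
      rw [hz, zero_smul]
    have hE : ∑ i ∈ Finset.range (2 * n + 1), ((-1 : ℤ) ^ i * (((2 * n).choose i : ℕ) : ℤ)) •
        (∑ p : Fin n, ∑ q : Fin n,
          (((2 * n - i).choose (p.1 + 1) * i.choose (q.1 + 1) : ℕ) : ℤ) •
            (tT k n ^ (2 * n - 2 - p.1 - q.1) * vT k n p * vT k n q))
        = ((-1 : ℤ) ^ n * ((2 * n).choose n : ℤ)) • (vT k n (⟨n - 1, by omega⟩ : Fin n)) ^ 2 := by
      simp only [← Finset.sum_zsmul, ← mul_zsmul]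
      rw [Finset.sum_comm]
      have hswap : ∀ p : Fin n, (∑ i ∈ Finset.range (2 * n + 1), ∑ q : Fin n,
            ((-1 : ℤ) ^ i * (((2 * n).choose i : ℕ) : ℤ) *
              (((2 * n - i).choose (p.1 + 1) * i.choose (q.1 + 1) : ℕ) : ℤ)) •
              (tT k n ^ (2 * n - 2 - p.1 - q.1) * vT k n p * vT k n q))
          = ∑ q : Fin n,
              (if p.1 + 1 + (q.1 + 1) = 2 * n
                then (-1 : ℤ) ^ (q.1 + 1) * ((2 * n).choose (p.1 + 1) : ℤ) else 0) •
              (tT k n ^ (2 * n - 2 - p.1 - q.1) * vT k n p * vT k n q) := by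
        intro p
        rw [Finset.sum_comm]
        refine Finset.sum_congr rfl fun q _ => ?_
        erw [← Finset.sum_smul]; rw [PsiAux.alt_tri (2 * n) (p.1 + 1) (q.1 + 1) (2 * n + 1) (by omega)]; rfl
      rw [Finset.sum_congr rfl fun p _ => hswap p]
      rw [Finset.sum_eq_single (⟨n - 1, by omega⟩ : Fin n)
        (fun p _ hp => Finset.sum_eq_zero fun q _ => by
          have hpv : p.1 ≠ n - 1 := fun hh => hp (Fin.ext hh)
          have := p.2
          have := q.2
          rw [if_neg (by omega), zero_zsmul])
        (fun h => absurd (Finset.mem_univ _) h)]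
      rw [Finset.sum_eq_single (⟨n - 1, by omega⟩ : Fin n)
        (fun q _ hq => by
          have hqv : q.1 ≠ n - 1 := fun hh => hq (Fin.ext hh)
          have := q.2
          rw [if_neg (by simp only; omega), zero_zsmul])
        (fun h => absurd (Finset.mem_univ _) h)]
      have hval : ((⟨n - 1, by omega⟩ : Fin n) : ℕ) = n - 1 := rfl
      rw [if_pos (by rw [hval]; omega)]
      rw [show ((⟨n - 1, by omega⟩ : Fin n) : ℕ) + 1 = n by rw [hval]; omega]
      rw [show 2 * n - 2 - ((⟨n - 1, by omega⟩ : Fin n) : ℕ) - ((⟨n - 1, by omega⟩ : Fin n) : ℕ)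
          = 0 by rw [hval]; omega]
      rw [pow_zero, one_mul, ← sq]
    rw [hA, hB, hC, hD, hE]
    simp
  · apply mul_ne_zero
    · exact pow_ne_zero _ (by norm_num)
    · exact_mod_cast (Nat.choose_pos (by omega : n ≤ 2 * n)).ne'
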